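/- In the multi-jeep model with 1 + m jeeps (one crossing jeep and m helper jeeps) and any real x ≥ 1: for every plan with x tankloads in which the crossing jeep reaches a state with position d and each of the m helper jeeps is at position 0 in the final state, one has d ≤ F(x). In other words, helper jeeps that are all required to return to the desert border cannot help the crossing jeep get farther than a single jeep with the same amount of fuel. -/

import Mathlib

/-- A state of the multi-jeep model with `N` jeeps: each jeep's position and
tank content, and a finitely supported function recording the fuel stored in
depots. -/
structure MultiState (N : ℕ) where
  pos : Fin N → ℝ
  tank : Fin N → ℝ
  depot : ℝ →₀ ℝ

/-- Admissible moves of the multi-jeep model: one jeep drives (consuming one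
tankload of fuel per unit of distance), or fuel is moved between the tank of a
jeep and the depot at its position, or between the tanks of two jeeps at the
same position; tank contents stay in `[0,1]` and depots stay nonnegative. -/
inductive MultiStep {N : ℕ} : MultiState N → MultiState N → Prop
  | drive (s : MultiState N) (i : Fin N) (p' : ℝ)
      (h : 0 ≤ s.tank i - |p' - s.pos i|) :
      MultiStep s ⟨Function.update s.pos i p',
        Function.update s.tank i (s.tank i - |p' - s.pos i|), s.depot⟩
  | transferDepot (s : MultiState N) (i : Fin N) (t' : ℝ) (D' : ℝ →₀ ℝ)
      (hcons : t' + D' (s.pos i) = s.tank i + s.depot (s.pos i))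
      (ht0 : 0 ≤ t') (ht1 : t' ≤ 1)
      (hD : ∀ q, 0 ≤ D' q)
      (heq : ∀ q, q ≠ s.pos i → D' q = s.depot q) :
      MultiStep s ⟨s.pos, Function.update s.tank i t', D'⟩
  | transferJeep (s : MultiState N) (i j : Fin N) (hij : i ≠ j)
      (hpos : s.pos i = s.pos j) (ti' tj' : ℝ)
      (hcons : ti' + tj' = s.tank i + s.tank j)
      (hi0 : 0 ≤ ti') (hi1 : ti' ≤ 1) (hj0 : 0 ≤ tj') (hj1 : tj' ≤ 1) :
      MultiStep s ⟨s.pos,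
        Function.update (Function.update s.tank i ti') j tj', s.depot⟩

/-- The initial state of a plan with `x` tankloads: all jeeps at position `0`
with empty tanks, and `x` tankloads of fuel at position `0`. -/
noncomputable def multiInit (N : ℕ) (x : ℝ) : MultiState N :=
  ⟨fun _ => 0, fun _ => 0, Finsupp.single 0 x⟩
/-- `F x = Σ_{k=1}^{⌈x⌉−1} 1/(2k−1) + (x − ⌈x⌉ + 1)/(2⌈x⌉ − 1)`. -/
noncomputable def F (x : ℝ) : ℝ :=
  (∑ k ∈ Finset.Icc 1 (⌈x⌉₊ - 1), 1 / (2 * (k : ℝ) - 1)) +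
    (x - ⌈x⌉₊ + 1) / (2 * (⌈x⌉₊ : ℝ) - 1)


namespace JeepAux


noncomputable def Fp (x : ℝ) : ℝ := if x ≤ 0 then 0 else F x

noncomputable def S (n : ℕ) : ℝ := ∑ k ∈ Finset.Icc 1 n, 1 / (2 * (k : ℝ) - 1)

lemma S_succ (n : ℕ) : S (n + 1) = S n + 1 / (2 * ((n : ℝ) + 1) - 1) := by
  rw [S, S, Finset.sum_Icc_succ_top (by omega)]
  push_cast; ring_nf

lemma Fp_nat (n : ℕ) : Fp n = S n := by
  cases n with
  | zero => simp [Fp, S]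
  | succ p =>
    have h1 : ¬ (((p + 1 : ℕ) : ℝ) ≤ 0) := by push_neg; positivity
    rw [Fp, if_neg h1, F, Nat.ceil_natCast]
    have h2 : p + 1 - 1 = p := rfl
    rw [h2, S, Finset.sum_Icc_succ_top (by omega : 1 ≤ p + 1)]
    have h3 : ((p + 1 : ℕ) : ℝ) - ((p + 1 : ℕ) : ℝ) + 1 = 1 := by ring
    rw [h3]

lemma Fp_seg {n : ℕ} (hn : 1 ≤ n) {t : ℝ} (h1 : (n : ℝ) - 1 ≤ t) (h2 : t ≤ n) :
    Fp t = S (n - 1) + (t - (n : ℝ) + 1) / (2 * (n : ℝ) - 1) := by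
  rcases le_or_gt t ((n : ℝ) - 1) with h | h
  · have ht : t = (n : ℝ) - 1 := le_antisymm h h1
    have : t = ((n - 1 : ℕ) : ℝ) := by rw [ht]; push_cast [hn]; ring
    rw [this, Fp_nat]
    have : ((n - 1 : ℕ) : ℝ) - (n : ℝ) + 1 = 0 := by push_cast [hn]; ring
    rw [this, zero_div, add_zero]
  · have ht0 : ¬ (t ≤ 0) := by
      push_neg
      calc (0:ℝ) ≤ (n:ℝ) - 1 := by simp [Nat.one_le_cast.mpr hn]
        _ < t := h
    have hc : ⌈t⌉₊ = n := by
      rw [Nat.ceil_eq_iff (by omega)]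
      constructor
      · push_cast [hn]; linarith
      · exact h2
    rw [Fp, if_neg ht0, F, hc, S]

lemma Fdiff_aux : ∀ (n : ℕ) (a b : ℝ), 0 ≤ b → b ≤ a → ⌈a⌉₊ ≤ n →
    (a - b) / (2 * ((max ⌈a⌉₊ 1 : ℕ) : ℝ) - 1) ≤ Fp a - Fp b := by
  intro n
  induction n with
  | zero =>
    intro a b hb hba hc
    have : ⌈a⌉₊ = 0 := by omega
    have ha : a ≤ 0 := by
      by_contra h
      push_neg at h
      have := Nat.ceil_pos.mpr h
      omega
    have ha0 : a = 0 := le_antisymm ha (hb.trans hba)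
    have hb0 : b = 0 := le_antisymm (by linarith) hb
    simp [ha0, hb0]
  | succ p ih =>
    intro a b hb hba hc
    rcases le_or_gt a 0 with ha | ha
    · have ha0 : a = 0 := le_antisymm ha (hb.trans hba)
      have hb0 : b = 0 := le_antisymm (by linarith) hb
      simp [ha0, hb0]
    · set m := ⌈a⌉₊ with hm
      have hm1 : 1 ≤ m := Nat.ceil_pos.mpr ha
      have hmax : max m 1 = m := max_eq_left hm1
      have hden : (0:ℝ) < 2 * (m : ℝ) - 1 := by
        have : (1:ℝ) ≤ (m:ℝ) := Nat.one_le_cast.mpr hm1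
        linarith
      have ham : a ≤ (m : ℝ) := Nat.le_ceil a
      have ham' : (m : ℝ) - 1 < a := by
        have := Nat.ceil_lt_add_one (le_of_lt ha)
        linarith
      rcases le_or_gt ((m:ℝ) - 1) b with hbm | hbm
      · -- both in segment [m-1, m]
        rw [Fp_seg hm1 hbm (hba.trans ham), Fp_seg hm1 (le_of_lt ham') ham, hmax]
        apply le_of_eq
        ring
      · -- split at m - 1
        have hm2 : 2 ≤ m := by
          by_contra h
          have : m = 1 := by omega
          rw [this] at hbm
          push_cast at hbm
          linarith
        set a' : ℝ := ((m - 1 : ℕ) : ℝ) with ha'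
        have ha'v : a' = (m : ℝ) - 1 := by rw [ha']; push_cast [hm1]; ring
        have hca' : ⌈a'⌉₊ = m - 1 := Nat.ceil_natCast _
        have step1 : (a' - b) / (2 * ((max ⌈a'⌉₊ 1 : ℕ) : ℝ) - 1) ≤ Fp a' - Fp b := by
          apply ih a' b hb (by rw [ha'v]; linarith) (by omega)
        have hmaxa' : ((max ⌈a'⌉₊ 1 : ℕ) : ℝ) ≤ (m : ℝ) := by
          rw [hca']
          have : max (m-1) 1 ≤ m := by omega
          exact_mod_cast this
        have hden' : (0:ℝ) < 2 * ((max ⌈a'⌉₊ 1 : ℕ) : ℝ) - 1 := by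
          have : (1:ℕ) ≤ max ⌈a'⌉₊ 1 := le_max_right _ _
          have : (1:ℝ) ≤ ((max ⌈a'⌉₊ 1 : ℕ) : ℝ) := Nat.one_le_cast.mpr this
          linarith
        have step1' : (a' - b) / (2 * (m : ℝ) - 1) ≤ Fp a' - Fp b := by
          refine le_trans (div_le_div_of_nonneg_left ?_ hden' ?_) step1
          · rw [ha'v]; linarith
          · linarith
        have step2 : Fp a - Fp a' = (a - a') / (2 * (m : ℝ) - 1) := by
          rw [Fp_seg hm1 (le_of_lt ham') ham, Fp_seg hm1 (by rw [ha'v]) (by rw [ha'v]; linarith)]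
          ring_nf
        rw [hmax]
        have : (a - b) / (2 * (m:ℝ) - 1) = (a - a') / (2 * (m:ℝ) - 1) + (a' - b) / (2 * (m:ℝ) - 1) := by
          ring
        rw [this]
        linarith

lemma Fdiff (a b : ℝ) (hb : 0 ≤ b) (hba : b ≤ a) :
    (a - b) / (2 * ((max ⌈a⌉₊ 1 : ℕ) : ℝ) - 1) ≤ Fp a - Fp b :=
  Fdiff_aux ⌈a⌉₊ a b hb hba le_rfl

lemma Fp_mono {a b : ℝ} (hb : 0 ≤ b) (hba : b ≤ a) : Fp b ≤ Fp a := by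
  have h := Fdiff a b hb hba
  have hden : (0:ℝ) < 2 * ((max ⌈a⌉₊ 1 : ℕ) : ℝ) - 1 := by
    have : (1:ℝ) ≤ ((max ⌈a⌉₊ 1 : ℕ) : ℝ) := Nat.one_le_cast.mpr (le_max_right _ _)
    linarith
  have : 0 ≤ (a - b) / (2 * ((max ⌈a⌉₊ 1 : ℕ) : ℝ) - 1) := div_nonneg (by linarith) (le_of_lt hden)
  linarith

lemma Fp_nonneg {a : ℝ} (ha : 0 ≤ a) : 0 ≤ Fp a := by
  have := Fp_mono le_rfl ha
  simpa [Fp] using this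

lemma Fp_eq_F {x : ℝ} (hx : 0 < x) : Fp x = F x := by
  rw [Fp, if_neg (not_le.mpr hx)]



/-! ### overlap and crossing indicators -/

noncomputable def ov (y a b : ℝ) : ℝ := max 0 (max a b - max y (min a b))

noncomputable def crN (y a b : ℝ) : ℕ := if a ≤ y ∧ y < b then 1 else 0

lemma ov_nonneg (y a b : ℝ) : 0 ≤ ov y a b := le_max_left _ _

lemma ov_self (y a : ℝ) : ov y a a = 0 := by
  simp only [ov, max_self, min_self]
  rw [max_eq_left]
  have := le_max_right y a
  linarith

lemma ov_anti {y y' : ℝ} (h : y ≤ y') (a b : ℝ) : ov y' a b ≤ ov y a b := by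
  apply max_le_max le_rfl
  apply sub_le_sub_left
  exact max_le_max h le_rfl

lemma ov_le_abs (y a b : ℝ) : ov y a b ≤ |b - a| := by
  have h1 : |b - a| = max a b - min a b := by
    rw [← max_sub_min_eq_abs, max_comm, min_comm]
  rw [h1]
  apply max_le
  · linarith [min_le_max (a := a) (b := b)]
  · apply sub_le_sub_left
    exact le_max_right _ _

lemma crN_self (y a : ℝ) : crN y a a = 0 := by
  unfold crN
  rw [if_neg]
  rintro ⟨h1, h2⟩
  exact absurd h2 (not_lt.mpr h1)

lemma crN_le_one (y a b : ℝ) : crN y a b ≤ 1 := by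
  unfold crN; split <;> omega

lemma crN_sub (y a b : ℝ) :
    (crN y a b : ℤ) - (crN y b a : ℤ)
      = (if y < b then (1:ℤ) else 0) - (if y < a then (1:ℤ) else 0) := by
  unfold crN
  by_cases h1 : y < a <;> by_cases h2 : y < b
  · rw [if_neg (fun hh : a ≤ y ∧ y < b => absurd hh.1 (not_le.mpr h1)),
      if_neg (fun hh : b ≤ y ∧ y < a => absurd hh.1 (not_le.mpr h2)),
      if_pos h2, if_pos h1]
    norm_num
  · rw [if_neg (fun hh : a ≤ y ∧ y < b => h2 hh.2),
      if_pos (⟨not_lt.mp h2, h1⟩ : b ≤ y ∧ y < a), if_neg h2, if_pos h1]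
    norm_num
  · rw [if_pos (⟨not_lt.mp h1, h2⟩ : a ≤ y ∧ y < b),
      if_neg (fun hh : b ≤ y ∧ y < a => h1 hh.2), if_pos h2, if_neg h1]
    norm_num
  · rw [if_neg (fun hh : a ≤ y ∧ y < b => h2 hh.2),
      if_neg (fun hh : b ≤ y ∧ y < a => h1 hh.2), if_neg h2, if_neg h1]
    norm_num

/-- drive step, single-jeep inequality -/
lemma drive_ineq {y a b t : ℝ} (ht1 : t ≤ 1) (hd : |b - a| ≤ t) :
    (if y < b then t - |b - a| else 0) + ov y a b
      ≤ (if y < a then t else 0) + (crN y a b : ℝ) := by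
  rcases le_total a b with hab | hab
  · have habs : |b - a| = b - a := abs_of_nonneg (by linarith)
    have hmin : min a b = a := min_eq_left hab
    have hmax : max a b = b := max_eq_right hab
    by_cases h1 : y < a
    · have h2 : y < b := lt_of_lt_of_le h1 hab
      have hya : max y a = a := max_eq_right (le_of_lt h1)
      have hov : ov y a b = b - a := by
        rw [ov, hmin, hmax, hya]; exact max_eq_right (by linarith)
      simp only [crN, if_pos h1, if_pos h2, if_neg (fun hh : a ≤ y ∧ y < b => absurd hh.1 (not_le.mpr h1))]
      rw [hov, habs]; norm_num
    · have hya : max y a = y := max_eq_left (not_lt.mp h1)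
      by_cases h2 : y < b
      · have hov : ov y a b = b - y := by
          rw [ov, hmin, hmax, hya]; exact max_eq_right (by linarith)
        have hcr : crN y a b = 1 := if_pos ⟨not_lt.mp h1, h2⟩
        simp only [if_pos h2, if_neg h1, hcr, hov, habs]
        push_cast
        have := not_lt.mp h1
        linarith
      · have hov : ov y a b = 0 := by
          rw [ov, hmin, hmax, hya]
          exact max_eq_left (by linarith [not_lt.mp h2])
        simp only [if_neg h1, if_neg h2, hov]
        have : (0:ℝ) ≤ (crN y a b : ℝ) := Nat.cast_nonneg _
        linarith
  · have habs : |b - a| = a - b := by rw [abs_sub_comm]; exact abs_of_nonneg (by linarith)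
    have hmin : min a b = b := min_eq_right hab
    have hmax : max a b = a := max_eq_left hab
    by_cases h2 : y < b
    · have h1 : y < a := lt_of_lt_of_le h2 hab
      have hyb : max y b = b := max_eq_right (le_of_lt h2)
      have hov : ov y a b = a - b := by
        rw [ov, hmin, hmax, hyb]; exact max_eq_right (by linarith)
      have hcr : crN y a b = 0 := by
        unfold crN; rw [if_neg]; rintro ⟨hh, _⟩; exact absurd hh (not_le.mpr h1)
      simp only [if_pos h1, if_pos h2, hcr, hov, habs]
      norm_num
    · have hyb : max y b = y := max_eq_left (not_lt.mp h2)
      have hcr : crN y a b = 0 := by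
        unfold crN; rw [if_neg]; rintro ⟨hh, hh2⟩; exact absurd hh2 h2
      by_cases h1 : y < a
      · have hov : ov y a b = a - y := by
          rw [ov, hmin, hmax, hyb]; exact max_eq_right (by linarith)
        simp only [if_neg h2, if_pos h1, hcr, hov, habs]
        push_cast
        have := not_lt.mp h2
        linarith
      · have hov : ov y a b = 0 := by
          rw [ov, hmin, hmax, hyb]
          exact max_eq_left (by linarith [not_lt.mp h1])
        simp only [if_neg h1, if_neg h2, hov, hcr]
        norm_num

/-! ### state quantities -/

def Valid {N : ℕ} (s : MultiState N) : Prop :=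
  (∀ i, 0 ≤ s.tank i ∧ s.tank i ≤ 1) ∧ ∀ q, 0 ≤ s.depot q

noncomputable def Rf {N : ℕ} (y : ℝ) (s : MultiState N) : ℝ :=
  (∑ i, if y < s.pos i then s.tank i else 0)
    + s.depot.sum fun q v => if y < q then v else 0

noncomputable def fuelTotal {N : ℕ} (s : MultiState N) : ℝ :=
  (∑ i, s.tank i) + s.depot.sum fun _ v => v

lemma sum_update {N : ℕ} (f : Fin N → ℝ) (i : Fin N) (b : ℝ) :
    ∑ j, Function.update f i b j = (∑ j, f j) - f i + b := by
  rw [Finset.sum_update_of_mem (Finset.mem_univ i)]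
  rw [Finset.sdiff_singleton_eq_erase, Finset.sum_erase_eq_sub (Finset.mem_univ i)]
  ring

lemma depot_sum_diff (h : ℝ → ℝ → ℝ) (hz : ∀ q, h q 0 = 0)
    (hadd : ∀ q u v, h q (u + v) = h q u + h q v)
    (D D' : ℝ →₀ ℝ) (p : ℝ) (heq : ∀ q, q ≠ p → D' q = D q) :
    D'.sum h = D.sum h - h p (D p) + h p (D' p) := by
  have key : ∀ E : ℝ →₀ ℝ, E.sum h = (E.erase p).sum h + h p (E p) := by
    intro E
    conv_lhs => rw [← Finsupp.erase_add_single p E]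
    rw [Finsupp.sum_add_index' hz hadd, Finsupp.sum_single_index (hz p)]
  have he : D'.erase p = D.erase p := by
    ext q
    by_cases hq : q = p
    · simp [hq, Finsupp.erase_same]
    · simp [Finsupp.erase_ne hq, heq q hq]
  rw [key D', key D, he]
  ring

lemma valid_step {N : ℕ} {s s' : MultiState N} (hv : Valid s) (h : MultiStep s s') :
    Valid s' := by
  obtain ⟨hv1, hv2⟩ := hv
  cases h with
  | drive i p' h =>
    refine ⟨fun j => ?_, hv2⟩
    by_cases hj : j = i
    · subst hj
      simp only [Function.update_self]
      refine ⟨h, ?_⟩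
      have := abs_nonneg (p' - s.pos j)
      have := (hv1 j).2
      linarith
    · simp only [Function.update_of_ne hj]
      exact hv1 j
  | transferDepot i t' D' hcons ht0 ht1 hD heq =>
    refine ⟨fun j => ?_, hD⟩
    by_cases hj : j = i
    · subst hj; simp only [Function.update_self]; exact ⟨ht0, ht1⟩
    · simp only [Function.update_of_ne hj]; exact hv1 j
  | transferJeep i j hij hpos ti' tj' hcons hi0 hi1 hj0 hj1 =>
    refine ⟨fun l => ?_, hv2⟩
    dsimp only
    by_cases hl : l = j
    · subst hl; simp only [Function.update_self]; exact ⟨hj0, hj1⟩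
    · rw [Function.update_of_ne hl]
      by_cases hl2 : l = i
      · subst hl2; simp only [Function.update_self]; exact ⟨hi0, hi1⟩
      · rw [Function.update_of_ne hl2]; exact hv1 l

lemma Rf_step {N : ℕ} {s s' : MultiState N} (hv : Valid s) (h : MultiStep s s') (y : ℝ) :
    Rf y s' + ∑ i, ov y (s.pos i) (s'.pos i)
      ≤ Rf y s + ∑ i, (crN y (s.pos i) (s'.pos i) : ℝ) := by
  classical
  cases h with
  | drive i p' h =>
    set A : Fin N → ℝ := fun j => if y < s.pos j then s.tank j else 0 with hA
    have hov : (∑ j, ov y (s.pos j) (Function.update s.pos i p' j)) = ov y (s.pos i) p' := by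
      rw [Finset.sum_eq_single_of_mem i (Finset.mem_univ i)]
      · rw [Function.update_self]
      · intro j _ hj
        rw [Function.update_of_ne hj, ov_self]
    have hcr : (∑ j, (crN y (s.pos j) (Function.update s.pos i p' j) : ℝ))
        = (crN y (s.pos i) p' : ℝ) := by
      rw [Finset.sum_eq_single_of_mem i (Finset.mem_univ i)]
      · rw [Function.update_self]
      · intro j _ hj
        rw [Function.update_of_ne hj, crN_self]; norm_num
    have htank : (fun j => if y < Function.update s.pos i p' j
          then Function.update s.tank i (s.tank i - |p' - s.pos i|) j else 0)
        = Function.update A i (if y < p' then s.tank i - |p' - s.pos i| else 0) := by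
      funext j
      by_cases hj : j = i
      · subst hj; simp [Function.update_self]
      · simp [Function.update_of_ne hj, hA]
    simp only [Rf, hov, hcr]
    rw [htank, sum_update]
    have key := drive_ineq (y := y) (a := s.pos i) (b := p') (hv.1 i).2 (by linarith)
    have hAi : A i = if y < s.pos i then s.tank i else 0 := rfl
    simp only [hA] at key ⊢
    linarith [key]
  | transferDepot i t' D' hcons ht0 ht1 hD heq =>
    set A : Fin N → ℝ := fun j => if y < s.pos j then s.tank j else 0 with hA
    have hov : (∑ j, ov y (s.pos j) (s.pos j)) = 0 :=
      Finset.sum_eq_zero fun j _ => ov_self y (s.pos j)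
    have hcr : (∑ j, (crN y (s.pos j) (s.pos j) : ℝ)) = 0 :=
      Finset.sum_eq_zero fun j _ => by rw [crN_self]; norm_num
    have htank : (fun j => if y < s.pos j then Function.update s.tank i t' j else 0)
        = Function.update A i (if y < s.pos i then t' else 0) := by
      funext j
      by_cases hj : j = i
      · subst hj; simp [Function.update_self]
      · simp [Function.update_of_ne hj, hA]
    have hdep := depot_sum_diff (fun q v => if y < q then v else 0)
      (fun q => by simp) (fun q u v => by split <;> simp) s.depot D' (s.pos i) heq
    simp only [Rf, hov, hcr]
    rw [htank, sum_update, hdep]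
    have hAsum : (∑ j, A j) = ∑ j, if y < s.pos j then s.tank j else 0 := rfl
    by_cases hy : y < s.pos i
    · have hAi : A i = s.tank i := by simp [hA, hy]
      simp only [if_pos hy]
      linarith
    · have hAi : A i = 0 := by simp [hA, hy]
      simp only [if_neg hy]
      linarith
  | transferJeep i j hij hpos ti' tj' hcons hi0 hi1 hj0 hj1 =>
    set A : Fin N → ℝ := fun l => if y < s.pos l then s.tank l else 0 with hA
    have hov : (∑ l, ov y (s.pos l) (s.pos l)) = 0 :=
      Finset.sum_eq_zero fun l _ => ov_self y (s.pos l)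
    have hcr : (∑ l, (crN y (s.pos l) (s.pos l) : ℝ)) = 0 :=
      Finset.sum_eq_zero fun l _ => by rw [crN_self]; norm_num
    have htank : (fun l => if y < s.pos l
          then Function.update (Function.update s.tank i ti') j tj' l else 0)
        = Function.update (Function.update A i (if y < s.pos i then ti' else 0)) j
            (if y < s.pos j then tj' else 0) := by
      funext l
      by_cases hl : l = j
      · subst hl; simp [Function.update_self]
      · rw [Function.update_of_ne hl, Function.update_of_ne hl]
        by_cases hl2 : l = i
        · subst hl2; simp [Function.update_self]
        · rw [Function.update_of_ne hl2, Function.update_of_ne hl2]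
    simp only [Rf, hov, hcr]
    rw [htank, sum_update, sum_update, Function.update_of_ne (Ne.symm hij)]
    have hAsum : (∑ l, A l) = ∑ l, if y < s.pos l then s.tank l else 0 := rfl
    by_cases hy : y < s.pos i
    · have hy' : y < s.pos j := hpos ▸ hy
      have hAi : A i = s.tank i := by simp [hA, hy]
      have hAj : A j = s.tank j := by simp [hA, hy']
      rw [if_pos hy, if_pos hy']
      linarith
    · have hy' : ¬ y < s.pos j := hpos ▸ hy
      have hAi : A i = 0 := by simp [hA, hy]
      have hAj : A j = 0 := by simp [hA, hy']
      rw [if_neg hy, if_neg hy']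
      linarith

lemma cons_step {N : ℕ} {s s' : MultiState N} (h : MultiStep s s') :
    fuelTotal s' + ∑ i, |s'.pos i - s.pos i| = fuelTotal s := by
  classical
  cases h with
  | drive i p' h =>
    have habs : (∑ j, |Function.update s.pos i p' j - s.pos j|) = |p' - s.pos i| := by
      rw [Finset.sum_eq_single_of_mem i (Finset.mem_univ i)]
      · rw [Function.update_self]
      · intro j _ hj
        rw [Function.update_of_ne hj, sub_self, abs_zero]
    simp only [fuelTotal, habs, sum_update]
    ring
  | transferDepot i t' D' hcons ht0 ht1 hD heq =>
    have habs : (∑ j, |s.pos j - s.pos j|) = 0 :=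
      Finset.sum_eq_zero fun j _ => by rw [sub_self, abs_zero]
    have hdep := depot_sum_diff (fun _ v => v) (fun q => rfl)
      (fun q u v => rfl) s.depot D' (s.pos i) heq
    dsimp only [fuelTotal]
    rw [habs, sum_update, hdep]
    linarith
  | transferJeep i j hij hpos ti' tj' hcons hi0 hi1 hj0 hj1 =>
    have habs : (∑ l, |s.pos l - s.pos l|) = 0 :=
      Finset.sum_eq_zero fun l _ => by rw [sub_self, abs_zero]
    dsimp only [fuelTotal]
    rw [habs, sum_update, sum_update, Function.update_of_ne (Ne.symm hij)]
    linarith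

/-! ## plan-level lemmas -/

lemma plan_valid {N k : ℕ} {f : ℕ → MultiState N}
    (hstep : ∀ j < k, MultiStep (f j) (f (j + 1))) (h0v : Valid (f 0)) :
    ∀ n, n ≤ k → Valid (f n) := by
  intro n
  induction n with
  | zero => intro _; exact h0v
  | succ p ih =>
    intro hpk
    exact valid_step (ih (by omega)) (hstep p (by omega))

lemma plan_Rf {N k : ℕ} {f : ℕ → MultiState N}
    (hstep : ∀ j < k, MultiStep (f j) (f (j + 1)))
    (hv : ∀ n, n ≤ k → Valid (f n)) (y : ℝ) :
    ∀ n, n ≤ k →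
      Rf y (f n) + ∑ l ∈ Finset.range n, ∑ i, ov y ((f l).pos i) ((f (l+1)).pos i)
        ≤ Rf y (f 0) + ∑ l ∈ Finset.range n, ∑ i, (crN y ((f l).pos i) ((f (l+1)).pos i) : ℝ) := by
  intro n
  induction n with
  | zero => intro _; simp
  | succ p ih =>
    intro hpk
    rw [Finset.sum_range_succ, Finset.sum_range_succ]
    have h1 := ih (by omega)
    have h2 := Rf_step (hv p (by omega)) (hstep p (by omega)) y
    linarith

lemma plan_cons {N k : ℕ} {f : ℕ → MultiState N}
    (hstep : ∀ j < k, MultiStep (f j) (f (j + 1))) :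
    ∀ n, n ≤ k →
      fuelTotal (f n) + ∑ l ∈ Finset.range n, ∑ i, |(f (l+1)).pos i - (f l).pos i| = fuelTotal (f 0) := by
  intro n
  induction n with
  | zero => intro _; simp
  | succ p ih =>
    intro hpk
    rw [Finset.sum_range_succ]
    have h1 := ih (by omega)
    have h2 := cons_step (hstep p (by omega))
    linarith

lemma cross_telescope (y : ℝ) (p : ℕ → ℝ) (n : ℕ) :
    ∑ l ∈ Finset.range n, ((crN y (p l) (p (l+1)) : ℤ) - (crN y (p (l+1)) (p l) : ℤ))
      = (if y < p n then (1:ℤ) else 0) - (if y < p 0 then (1:ℤ) else 0) := by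
  rw [← Finset.sum_range_sub (fun l => if y < p l then (1:ℤ) else 0) n]
  apply Finset.sum_congr rfl
  intro l _
  exact crN_sub y (p l) (p (l+1))

lemma ov_cover {a b y p q : ℝ} (hab : a ≤ b) (hy : y ∈ Set.Ioo a b)
    (hp : p ∉ Set.Ioo a b) (hq : q ∉ Set.Ioo a b) :
    (b - a) * ((crN y p q : ℝ) + (crN y q p : ℝ)) ≤ ov a p q - ov b p q := by
  obtain ⟨hya, hyb⟩ := hy
  by_cases hc1 : p ≤ y ∧ y < q
  · -- rightward crossing
    obtain ⟨hpy, hyq⟩ := hc1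
    have hqb : b ≤ q := by
      by_contra hcon
      exact hq ⟨lt_trans hya hyq, not_le.mp hcon⟩
    have hpa : p ≤ a := by
      by_contra hcon
      exact hp ⟨not_le.mp hcon, lt_of_le_of_lt hpy hyb⟩
    have hcr1 : crN y p q = 1 := if_pos ⟨hpy, hyq⟩
    have hcr2 : crN y q p = 0 := by
      unfold crN; rw [if_neg]; rintro ⟨h1, _⟩; exact absurd h1 (not_le.mpr hyq)
    have hminpq : min p q = p := min_eq_left (by linarith)
    have hmaxpq : max p q = q := max_eq_right (by linarith)
    have hova : ov a p q = q - a := by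
      rw [ov, hminpq, hmaxpq, max_eq_left hpa]
      exact max_eq_right (by linarith)
    have hovb : ov b p q = q - b := by
      rw [ov, hminpq, hmaxpq, max_eq_left (by linarith : p ≤ b)]
      exact max_eq_right (by linarith)
    rw [hcr1, hcr2, hova, hovb]
    norm_num
  · by_cases hc2 : q ≤ y ∧ y < p
    · obtain ⟨hqy, hyp⟩ := hc2
      have hpb : b ≤ p := by
        by_contra hcon
        exact hp ⟨lt_trans hya hyp, not_le.mp hcon⟩
      have hqa : q ≤ a := by
        by_contra hcon
        exact hq ⟨not_le.mp hcon, lt_of_le_of_lt hqy hyb⟩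
      have hcr1 : crN y p q = 0 := by
        unfold crN; rw [if_neg]; rintro ⟨h1, _⟩; exact absurd h1 (not_le.mpr hyp)
      have hcr2 : crN y q p = 1 := if_pos ⟨hqy, hyp⟩
      have hminpq : min p q = q := min_eq_right (by linarith)
      have hmaxpq : max p q = p := max_eq_left (by linarith)
      have hova : ov a p q = p - a := by
        rw [ov, hminpq, hmaxpq, max_eq_left hqa]
        exact max_eq_right (by linarith)
      have hovb : ov b p q = p - b := by
        rw [ov, hminpq, hmaxpq, max_eq_left (by linarith : q ≤ b)]
        exact max_eq_right (by linarith)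
      rw [hcr1, hcr2, hova, hovb]
      norm_num
    · have hcr1 : crN y p q = 0 := by unfold crN; rw [if_neg hc1]
      have hcr2 : crN y q p = 0 := by unfold crN; rw [if_neg hc2]
      rw [hcr1, hcr2]
      have := ov_anti hab p q
      norm_num
      linarith

/-! ## the chain lemma -/

lemma chain (T : Finset ℝ) (g : ℝ → ℝ) (d : ℝ) (hdT : d ∈ T)
    (key : ∀ a b : ℝ, 0 ≤ a → a < b → b ≤ d → (∀ p ∈ T, p ∉ Set.Ioo a b) →
      b - a ≤ Fp (g a) - Fp (g b)) :
    ∀ a, 0 ≤ a → a ≤ d → d - a ≤ Fp (g a) - Fp (g d) := by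
  classical
  suffices h : ∀ n : ℕ, ∀ a, 0 ≤ a → a ≤ d →
      (T.filter (fun p => a < p ∧ p ≤ d)).card ≤ n → d - a ≤ Fp (g a) - Fp (g d) by
    intro a ha had
    exact h _ a ha had le_rfl
  intro n
  induction n with
  | zero =>
    intro a ha had hcard
    rcases eq_or_lt_of_le had with heq | hlt
    · subst heq; simp
    · exfalso
      have : d ∈ T.filter (fun p => a < p ∧ p ≤ d) :=
        Finset.mem_filter.mpr ⟨hdT, hlt, le_rfl⟩
      have := Finset.card_pos.mpr ⟨d, this⟩
      omega
  | succ n ih =>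
    intro a ha had hcard
    rcases eq_or_lt_of_le had with heq | hlt
    · subst heq; simp
    · set s := T.filter (fun p => a < p ∧ p ≤ d) with hs
      have hds : d ∈ s := Finset.mem_filter.mpr ⟨hdT, hlt, le_rfl⟩
      have hne : s.Nonempty := ⟨d, hds⟩
      set b := s.min' hne with hb
      have hbs : b ∈ s := Finset.min'_mem _ _
      obtain ⟨hbT, hab, hbd⟩ : b ∈ T ∧ a < b ∧ b ≤ d := by
        have := Finset.mem_filter.mp hbs
        exact ⟨this.1, this.2.1, this.2.2⟩
      have hfree : ∀ p ∈ T, p ∉ Set.Ioo a b := by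
        intro p hp hpin
        have hps : p ∈ s := Finset.mem_filter.mpr ⟨hp, hpin.1, le_trans (le_of_lt hpin.2) hbd⟩
        exact absurd hpin.2 (not_lt.mpr (Finset.min'_le s p hps))
      have h1 := key a b ha hab hbd hfree
      have h2 : d - b ≤ Fp (g b) - Fp (g d) := by
        apply ih b (le_trans ha (le_of_lt hab)) hbd
        have hss : T.filter (fun p => b < p ∧ p ≤ d) ⊆ s := by
          intro p hp
          obtain ⟨hpT, hbp, hpd⟩ := Finset.mem_filter.mp hp
          exact Finset.mem_filter.mpr ⟨hpT, ⟨lt_trans hab hbp, hpd⟩⟩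
        have hbnot : b ∉ T.filter (fun p => b < p ∧ p ≤ d) := by
          intro hcon
          exact absurd (Finset.mem_filter.mp hcon).2.1 (lt_irrefl b)
        have : T.filter (fun p => b < p ∧ p ≤ d) ⊂ s :=
          (Finset.ssubset_iff_of_subset hss).mpr ⟨b, hbs, hbnot⟩
        have := Finset.card_lt_card this
        omega
      linarith

end JeepAux

open JeepAux in
/-- With `1 + m` jeeps (jeep `0` is the crossing jeep and the other `m` are
helpers) and `x ≥ 1` tankloads: for every plan in which the crossing jeep
reaches a state with position `d` and all helper jeeps are at position `0` in
the final state, `d ≤ F x`. -/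
theorem multi_helpers_return_bound (m : ℕ) (x : ℝ) (hx : 1 ≤ x) (d : ℝ)
    (k : ℕ) (f : ℕ → MultiState (m + 1))
    (h0 : f 0 = multiInit (m + 1) x)
    (hstep : ∀ j < k, MultiStep (f j) (f (j + 1)))
    (hcross : ∃ j ≤ k, (f j).pos 0 = d)
    (hhelpers : ∀ i : Fin (m + 1), i ≠ 0 → (f k).pos i = 0) :
    d ≤ F x := by
  classical
  obtain ⟨j, hjk, hjd⟩ := hcross
  have hx0 : (0:ℝ) < x := by linarith
  have hFx : Fp x = F x := Fp_eq_F hx0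
  have hF1 : (1:ℝ) ≤ F x := by
    have h1 : Fp ((1:ℕ):ℝ) = S 1 := Fp_nat 1
    have h2 : S 1 = 1 := by norm_num [S]
    have h3 : Fp 1 ≤ Fp x := Fp_mono (by norm_num) hx
    rw [Nat.cast_one] at h1
    linarith
  rcases le_or_gt d 0 with hd | hd
  · linarith
  -- validity along the plan
  have h0valid : Valid (f 0) := by
    rw [h0]
    constructor
    · intro i
      constructor <;> norm_num [multiInit]
    · intro q
      show 0 ≤ Finsupp.single (0:ℝ) x q
      rw [Finsupp.single_apply]
      split <;> linarith
  have hvalid := plan_valid hstep h0valid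
  -- main quantities
  set g : ℝ → ℝ :=
    fun y => ∑ l ∈ Finset.range k, ∑ i, ov y ((f l).pos i) ((f (l+1)).pos i) with hGdef
  set tR : ℝ → ℕ :=
    fun y => ∑ l ∈ Finset.range k, ∑ i, crN y ((f l).pos i) ((f (l+1)).pos i) with htRdef
  set tL : ℝ → ℕ :=
    fun y => ∑ l ∈ Finset.range k, ∑ i, crN y ((f (l+1)).pos i) ((f l).pos i) with htLdef
  have hg_nonneg : ∀ y, 0 ≤ g y := fun y =>
    Finset.sum_nonneg fun l _ => Finset.sum_nonneg fun i _ => ov_nonneg _ _ _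
  have hg_anti : ∀ {y y' : ℝ}, y ≤ y' → g y' ≤ g y := fun {y y'} h =>
    Finset.sum_le_sum fun l _ => Finset.sum_le_sum fun i _ => ov_anti h _ _
  have hg_cont : Continuous g := by
    apply continuous_finset_sum
    intro l _
    apply continuous_finset_sum
    intro i _
    unfold ov
    fun_prop
  -- invariant : g y ≤ tR y for y ≥ 0
  have hRf0 : ∀ y : ℝ, 0 ≤ y → Rf y (f 0) = 0 := by
    intro y hy
    rw [h0]
    simp only [Rf, multiInit]
    rw [Finsupp.sum_single_index (by simp)]
    simp [not_lt.mpr hy]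
  have hA : ∀ y : ℝ, 0 ≤ y → g y ≤ (tR y : ℝ) := by
    intro y hy
    have h1 := plan_Rf hstep hvalid y k le_rfl
    rw [hRf0 y hy] at h1
    have h2 : 0 ≤ Rf y (f k) := by
      obtain ⟨hv1, hv2⟩ := hvalid k le_rfl
      have ht : 0 ≤ ∑ i, if y < (f k).pos i then (f k).tank i else 0 :=
        Finset.sum_nonneg fun i _ => by split; exacts [(hv1 i).1, le_rfl]
      have hd2 : 0 ≤ (f k).depot.sum fun q v => if y < q then v else 0 := by
        rw [Finsupp.sum]
        exact Finset.sum_nonneg fun q _ => by split; exacts [hv2 q, le_rfl]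
      unfold Rf
      linarith
    have h3 : (tR y : ℝ)
        = ∑ l ∈ Finset.range k, ∑ i, (crN y ((f l).pos i) ((f (l+1)).pos i) : ℝ) := by
      simp only [htRdef]
      push_cast
      rfl
    simp only [hGdef]
    rw [h3]
    linarith
  -- conservation : g 0 ≤ x
  have hgx : g 0 ≤ x := by
    have h1 := plan_cons hstep k le_rfl
    have h2 : fuelTotal (f 0) = x := by
      rw [h0]
      simp only [fuelTotal, multiInit]
      rw [Finsupp.sum_single_index rfl]
      simp
    have h3 : 0 ≤ fuelTotal (f k) := by
      obtain ⟨hv1, hv2⟩ := hvalid k le_rfl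
      have ht : 0 ≤ ∑ i, (f k).tank i := Finset.sum_nonneg fun i _ => (hv1 i).1
      have hd2 : 0 ≤ (f k).depot.sum fun _ v => v := by
        rw [Finsupp.sum]
        exact Finset.sum_nonneg fun q _ => hv2 q
      unfold fuelTotal
      linarith
    have h4 : g 0 ≤ ∑ l ∈ Finset.range k, ∑ i, |(f (l+1)).pos i - (f l).pos i| := by
      simp only [hGdef]
      exact Finset.sum_le_sum fun l _ => Finset.sum_le_sum fun i _ => ov_le_abs _ _ _
    linarith
  -- parity : tR ≤ tL + 1
  have hparity : ∀ y : ℝ, 0 ≤ y → (tR y : ℤ) ≤ (tL y : ℤ) + 1 := by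
    intro y hy
    have htel : (tR y : ℤ) - (tL y : ℤ)
        = ∑ i : Fin (m+1), ((if y < (f k).pos i then (1:ℤ) else 0)
            - (if y < (f 0).pos i then (1:ℤ) else 0)) := by
      have h1 : (tR y : ℤ)
          = ∑ i : Fin (m+1), ∑ l ∈ Finset.range k, (crN y ((f l).pos i) ((f (l+1)).pos i) : ℤ) := by
        simp only [htRdef]
        push_cast
        exact Finset.sum_comm
      have h2 : (tL y : ℤ)
          = ∑ i : Fin (m+1), ∑ l ∈ Finset.range k, (crN y ((f (l+1)).pos i) ((f l).pos i) : ℤ) := by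
        simp only [htLdef]
        push_cast
        exact Finset.sum_comm
      rw [h1, h2, ← Finset.sum_sub_distrib]
      apply Finset.sum_congr rfl
      intro i _
      rw [← Finset.sum_sub_distrib]
      exact cross_telescope y (fun n => (f n).pos i) k
    have hbound : ∀ i : Fin (m+1),
        ((if y < (f k).pos i then (1:ℤ) else 0) - (if y < (f 0).pos i then (1:ℤ) else 0))
          ≤ (if i = 0 then (1:ℤ) else 0) := by
      intro i
      have hstart : (f 0).pos i = 0 := by rw [h0]; rfl
      rw [hstart, if_neg (not_lt.mpr hy)]
      by_cases hi : i = 0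
      · rw [if_pos hi]
        split <;> norm_num
      · rw [hhelpers i hi, if_neg (not_lt.mpr hy), if_neg hi]
        norm_num
    have hend : (tR y : ℤ) - (tL y : ℤ) ≤ 1 := by
      rw [htel]
      calc ∑ i : Fin (m+1), ((if y < (f k).pos i then (1:ℤ) else 0)
              - (if y < (f 0).pos i then (1:ℤ) else 0))
          ≤ ∑ i : Fin (m+1), (if i = 0 then (1:ℤ) else 0) :=
            Finset.sum_le_sum fun i _ => hbound i
        _ = 1 := by
            rw [Finset.sum_ite_eq' Finset.univ (0 : Fin (m+1)) (fun _ => (1:ℤ))]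
            simp
    omega
  -- jeep 0 crosses each y ∈ [0,d)
  have hcross1 : ∀ y : ℝ, 0 ≤ y → y < d → 1 ≤ tR y := by
    intro y hy hyd
    have htel := cross_telescope y (fun n => (f n).pos 0) j
    have hstart : (f 0).pos 0 = 0 := by rw [h0]; rfl
    rw [hstart, hjd, if_pos hyd, if_neg (not_lt.mpr hy)] at htel
    have h1 : (1:ℤ) ≤ ∑ l ∈ Finset.range j, (crN y ((f l).pos 0) ((f (l+1)).pos 0) : ℤ) := by
      have h2 : ∑ l ∈ Finset.range j, ((crN y ((f l).pos 0) ((f (l+1)).pos 0) : ℤ)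
            - (crN y ((f (l+1)).pos 0) ((f l).pos 0) : ℤ))
          ≤ ∑ l ∈ Finset.range j, (crN y ((f l).pos 0) ((f (l+1)).pos 0) : ℤ) := by
        apply Finset.sum_le_sum
        intro l _
        have hpos : (0:ℤ) ≤ (crN y ((f (l+1)).pos 0) ((f l).pos 0) : ℤ) := Int.ofNat_nonneg _
        linarith
      rw [htel] at h2
      linarith
    have h1' : (1:ℕ) ≤ ∑ l ∈ Finset.range j, crN y ((f l).pos 0) ((f (l+1)).pos 0) := by
      have : ((∑ l ∈ Finset.range j, crN y ((f l).pos 0) ((f (l+1)).pos 0) : ℕ) : ℤ)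
          = ∑ l ∈ Finset.range j, (crN y ((f l).pos 0) ((f (l+1)).pos 0) : ℤ) := by push_cast; rfl
      omega
    have h3 : ∑ l ∈ Finset.range j, crN y ((f l).pos 0) ((f (l+1)).pos 0)
        ≤ ∑ l ∈ Finset.range j, ∑ i, crN y ((f l).pos i) ((f (l+1)).pos i) :=
      Finset.sum_le_sum fun l _ =>
        Finset.single_le_sum (f := fun i : Fin (m+1) => crN y ((f l).pos i) ((f (l+1)).pos i))
          (fun i _ => Nat.zero_le _) (Finset.mem_univ 0)
    have h4 : ∑ l ∈ Finset.range j, ∑ i, crN y ((f l).pos i) ((f (l+1)).pos i) ≤ tR y := by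
      simp only [htRdef]
      exact Finset.sum_le_sum_of_subset (Finset.range_subset_range.mpr hjk)
    omega
  -- covering bound
  have hcover : ∀ a b : ℝ, a ≤ b → (∀ n, n ≤ k → ∀ i, (f n).pos i ∉ Set.Ioo a b) →
      ∀ y, y ∈ Set.Ioo a b → (b - a) * ((tR y : ℝ) + (tL y : ℝ)) ≤ g a - g b := by
    intro a b hab hfree y hy
    have h1 : (b - a) * ((tR y : ℝ) + (tL y : ℝ))
        = ∑ l ∈ Finset.range k, ∑ i, (b - a) * ((crN y ((f l).pos i) ((f (l+1)).pos i) : ℝ)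
            + (crN y ((f (l+1)).pos i) ((f l).pos i) : ℝ)) := by
      simp only [htRdef, htLdef]
      push_cast
      rw [← Finset.sum_add_distrib, Finset.mul_sum]
      apply Finset.sum_congr rfl
      intro l _
      rw [← Finset.sum_add_distrib, Finset.mul_sum]
    have h2 : g a - g b = ∑ l ∈ Finset.range k, ∑ i,
        (ov a ((f l).pos i) ((f (l+1)).pos i) - ov b ((f l).pos i) ((f (l+1)).pos i)) := by
      simp only [hGdef]
      rw [← Finset.sum_sub_distrib]
      apply Finset.sum_congr rfl
      intro l _
      rw [← Finset.sum_sub_distrib]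
    rw [h1, h2]
    apply Finset.sum_le_sum
    intro l hl
    apply Finset.sum_le_sum
    intro i _
    have hlk : l < k := Finset.mem_range.mp hl
    exact ov_cover hab hy (hfree l (by omega) i) (hfree (l+1) (by omega) i)
  -- the finite set of breakpoints
  set T : Finset ℝ := insert d ((((Finset.range (k+1)) ×ˢ (Finset.univ : Finset (Fin (m+1)))).image
      (fun nl => (f nl.1).pos nl.2)).filter (fun p => 0 ≤ p ∧ p ≤ d)) with hTdef
  have hdT : d ∈ T := Finset.mem_insert_self _ _
  have hmemT : ∀ n, n ≤ k → ∀ i : Fin (m+1), 0 ≤ (f n).pos i → (f n).pos i ≤ d →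
      (f n).pos i ∈ T := by
    intro n hn i h1 h2
    apply Finset.mem_insert_of_mem
    apply Finset.mem_filter.mpr
    refine ⟨Finset.mem_image.mpr ⟨(n, i), ?_, rfl⟩, h1, h2⟩
    exact Finset.mem_product.mpr ⟨Finset.mem_range.mpr (by omega), Finset.mem_univ i⟩
  -- the key step
  have key : ∀ a b : ℝ, 0 ≤ a → a < b → b ≤ d → (∀ p ∈ T, p ∉ Set.Ioo a b) →
      b - a ≤ Fp (g a) - Fp (g b) := by
    intro a b ha hab hbd hfree
    have hfree' : ∀ n, n ≤ k → ∀ i, (f n).pos i ∉ Set.Ioo a b := by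
      intro n hn i hin
      exact hfree _ (hmemT n hn i (le_trans ha (le_of_lt hin.1))
        (le_trans (le_of_lt hin.2) hbd)) hin
    -- choose y close to a with g y > ⌈g a⌉ - 1
    have hga0 : 0 ≤ g a := hg_nonneg a
    have hceil : ((⌈g a⌉₊ : ℝ) - 1) < g a := by
      have := Nat.ceil_lt_add_one hga0
      linarith
    set ε : ℝ := g a - ((⌈g a⌉₊ : ℝ) - 1) with hε
    have hεpos : 0 < ε := by rw [hε]; linarith
    obtain ⟨δ, hδpos, hδ⟩ := Metric.continuousAt_iff.mp hg_cont.continuousAt ε hεpos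
    set y : ℝ := a + min (δ/2) ((b-a)/2) with hydef
    have hminpos : 0 < min (δ/2) ((b-a)/2) := lt_min (by linarith) (by linarith)
    have hyIoo : y ∈ Set.Ioo a b := by
      constructor
      · rw [hydef]; linarith
      · rw [hydef]
        have := min_le_right (δ/2) ((b-a)/2)
        linarith
    have hdisty : dist y a < δ := by
      rw [Real.dist_eq, hydef]
      have h5 : a + min (δ/2) ((b-a)/2) - a = min (δ/2) ((b-a)/2) := by ring
      rw [h5, abs_of_nonneg (le_of_lt hminpos)]
      have := min_le_left (δ/2) ((b-a)/2)
      linarith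
    have hgy : ((⌈g a⌉₊ : ℝ) - 1) < g y := by
      have h6 := hδ hdisty
      rw [Real.dist_eq] at h6
      have h7 := (abs_lt.mp h6).1
      rw [hε] at h7
      linarith
    have hy0 : (0:ℝ) ≤ y := le_trans ha (le_of_lt hyIoo.1)
    have hyd : y < d := lt_of_lt_of_le hyIoo.2 hbd
    set M : ℕ := max ⌈g a⌉₊ 1 with hM
    have hM1 : 1 ≤ M := le_max_right _ _
    have htRM : M ≤ tR y := by
      rw [hM]
      apply max_le
      · have hc1 : ⌈g a⌉₊ ≤ ⌈g y⌉₊ := by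
          rcases Nat.eq_zero_or_pos ⌈g a⌉₊ with h | h
          · omega
          · have h8 : (⌈g a⌉₊ - 1 : ℕ) < ⌈g y⌉₊ := by
              rw [Nat.lt_ceil]
              have hcast : ((⌈g a⌉₊ - 1 : ℕ) : ℝ) = (⌈g a⌉₊ : ℝ) - 1 := by
                push_cast [h]
                ring
              rw [hcast]
              exact hgy
            omega
        have hc2 : ⌈g y⌉₊ ≤ tR y := Nat.ceil_le.mpr (hA y hy0)
        omega
      · exact hcross1 y hy0 hyd
    have hcount : 2 * (M:ℝ) - 1 ≤ (tR y : ℝ) + (tL y : ℝ) := by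
      have hp := hparity y hy0
      have h9 : (M:ℤ) ≤ (tR y : ℤ) := by exact_mod_cast htRM
      have hz : 2 * (M:ℤ) - 1 ≤ (tR y : ℤ) + (tL y : ℤ) := by omega
      exact_mod_cast hz
    have hslope := hcover a b (le_of_lt hab) hfree' y hyIoo
    have hba0 : (0:ℝ) ≤ b - a := by linarith
    have hslope2 : (b - a) * (2*(M:ℝ) - 1) ≤ g a - g b :=
      le_trans (mul_le_mul_of_nonneg_left hcount hba0) hslope
    have hgb : g b ≤ g a := hg_anti (le_of_lt hab)
    have hFdiff := Fdiff (g a) (g b) (hg_nonneg b) hgb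
    rw [← hM] at hFdiff
    have hden : (0:ℝ) < 2*(M:ℝ) - 1 := by
      have : (1:ℝ) ≤ (M:ℝ) := by exact_mod_cast hM1
      linarith
    have h10 : b - a ≤ (g a - g b) / (2*(M:ℝ) - 1) :=
      (le_div_iff₀ hden).mpr (by linarith)
    linarith
  -- conclude
  have hchain := chain T g d hdT key 0 le_rfl (le_of_lt hd)
  have h5 : 0 ≤ Fp (g d) := Fp_nonneg (hg_nonneg d)
  have h6 : Fp (g 0) ≤ Fp x := Fp_mono (hg_nonneg 0) hgx
  linarith
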